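/- Let t ≥ 2 be an integer and set T = 2^t − 1. For each odd integer a with 1 ≤ a ≤ T define ε_a = 1 if a = T, and otherwise ε_a = the least nonnegative integer k such that a·2^k ≥ T (that is, ε_a = ⌈log_2(T/a)⌉). Then the number N_t of odd integers a with 1 ≤ a ≤ T for which ε_a is odd equals (2^t + (−1)^{t−1})/3. -/

import Mathlib

/-- `cycEps T a` is `1` if `a = T`, and otherwise the least nonnegative integer `k`
with `a * 2 ^ k ≥ T` (that is, `⌈log₂ (T / a)⌉`). -/
noncomputable def cycEps (T a : ℕ) : ℕ := if a = T then 1 else sInf {k : ℕ | T ≤ a * 2 ^ k}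

lemma pow_sub_one_lt' (t : ℕ) : 2^t - 1 < 2^t :=
  Nat.sub_lt (Nat.pow_pos (by norm_num)) one_pos

lemma log_pow_sub_one' (t : ℕ) (ht : 1 ≤ t) : Nat.log 2 (2^t - 1) = t - 1 := by
  apply Nat.log_eq_of_pow_le_of_lt_pow
  · have h := Nat.pow_lt_pow_right (a := 2) (by norm_num) (show t - 1 < t by omega)
    omega
  · have : t - 1 + 1 = t := by omega
    rw [this]
    exact pow_sub_one_lt' t

lemma cycEps_eq' (t a : ℕ) (ht : 1 ≤ t) (h1 : 1 ≤ a) (h2 : a ≤ 2^t - 1) :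
    cycEps (2^t - 1) a = t - Nat.log 2 a := by
  unfold cycEps
  have hT : 1 ≤ 2^t := Nat.one_le_two_pow
  have hja : 2^(Nat.log 2 a) ≤ a := Nat.pow_log_le_self 2 (by omega)
  have haj : a < 2^(Nat.log 2 a + 1) := Nat.lt_pow_succ_log_self (by norm_num) a
  have hjt : Nat.log 2 a ≤ t - 1 := by
    by_contra h
    have : 2^t ≤ 2^(Nat.log 2 a) := Nat.pow_le_pow_right (by norm_num) (by omega)
    omega
  by_cases ha : a = 2^t - 1
  · rw [if_pos ha, ha, log_pow_sub_one' t ht]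
    omega
  · rw [if_neg ha]
    have halt : a < 2^t - 1 := by omega
    have hmem : 2^t - 1 ≤ a * 2^(t - Nat.log 2 a) := by
      calc 2^t - 1 ≤ 2^(Nat.log 2 a) * 2^(t - Nat.log 2 a) := by
            rw [← pow_add, show Nat.log 2 a + (t - Nat.log 2 a) = t by omega]
            omega
        _ ≤ a * 2^(t - Nat.log 2 a) := Nat.mul_le_mul_right _ hja
    apply le_antisymm
    · exact Nat.sInf_le hmem
    · by_contra hlt
      push_neg at hlt
      set m := sInf {k : ℕ | 2^t - 1 ≤ a * 2 ^ k} with hmdef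
      have hm' : 2^t - 1 ≤ a * 2^m :=
        Nat.sInf_mem (⟨t - Nat.log 2 a, hmem⟩ : Set.Nonempty {k : ℕ | 2^t - 1 ≤ a * 2^k})
      have hm1 : m ≤ t - Nat.log 2 a - 1 := by omega
      have hmono : a * 2^m ≤ a * 2^(t - Nat.log 2 a - 1) :=
        Nat.mul_le_mul_left _ (Nat.pow_le_pow_right (by norm_num) hm1)
      have hlt2 : a * 2^(t - Nat.log 2 a - 1) < 2^t - 1 := by
        rcases Nat.lt_or_ge (Nat.log 2 a) (t-1) with hc | hc
        · have h5 : a * 2^(t - Nat.log 2 a - 1) ≤ (2^(Nat.log 2 a + 1) - 1) * 2^(t - Nat.log 2 a - 1) :=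
            Nat.mul_le_mul_right _ (by omega)
          have h6 : (2^(Nat.log 2 a + 1) - 1) * 2^(t - Nat.log 2 a - 1) = 2^t - 2^(t - Nat.log 2 a - 1) := by
            rw [Nat.sub_mul, one_mul, ← pow_add,
              show Nat.log 2 a + 1 + (t - Nat.log 2 a - 1) = t by omega]
          have h7 : 2 ≤ 2^(t - Nat.log 2 a - 1) := by
            calc 2 = 2^1 := rfl
            _ ≤ 2^(t - Nat.log 2 a - 1) := Nat.pow_le_pow_right (by norm_num) (by omega)
          omega
        · rw [show t - Nat.log 2 a - 1 = 0 by omega, pow_zero, mul_one]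
          omega
      omega

def Ft (t : ℕ) : Finset ℕ :=
  (Finset.Ioc 0 (2^t-1)).filter (fun a => Odd a ∧ Odd (t - Nat.log 2 a))

lemma log2_eq (a j : ℕ) (h1 : 2^j ≤ a) (h2 : a < 2^(j+1)) : Nat.log 2 a = j :=
  Nat.log_eq_of_pow_le_of_lt_pow h1 h2

lemma card_Ft_two : (Ft 2).card = 1 := by
  have l1 : Nat.log 2 1 = 0 := Nat.log_one_right 2
  have l3 : Nat.log 2 3 = 1 := log2_eq 3 1 (by norm_num) (by norm_num)
  have h : Ft 2 = {3} := by
    ext a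
    simp only [Ft, Finset.mem_filter, Finset.mem_Ioc, Finset.mem_singleton, Nat.odd_iff]
    constructor
    · rintro ⟨⟨h1, h2⟩, h3, h4⟩
      interval_cases a
      · rw [l1] at h4; omega
      · omega
      · rfl
    · rintro rfl
      rw [l3]
      norm_num
  rw [h, Finset.card_singleton]

lemma card_Ft_three : (Ft 3).card = 3 := by
  have l1 : Nat.log 2 1 = 0 := Nat.log_one_right 2
  have l3 : Nat.log 2 3 = 1 := log2_eq 3 1 (by norm_num) (by norm_num)
  have l5 : Nat.log 2 5 = 2 := log2_eq 5 2 (by norm_num) (by norm_num)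
  have l7 : Nat.log 2 7 = 2 := log2_eq 7 2 (by norm_num) (by norm_num)
  have h : Ft 3 = {1, 5, 7} := by
    ext a
    simp only [Ft, Finset.mem_filter, Finset.mem_Ioc, Finset.mem_insert,
      Finset.mem_singleton, Nat.odd_iff]
    constructor
    · rintro ⟨⟨h1, h2⟩, h3, h4⟩
      interval_cases a
      · left; rfl
      · omega
      · rw [l3] at h4; omega
      · omega
      · right; left; rfl
      · omega
      · right; right; rfl
    · rintro (rfl | rfl | rfl)
      · rw [l1]; norm_num
      · rw [l5]; norm_num
      · rw [l7]; norm_num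
  rw [h]
  decide

lemma odd_count (m n : ℕ) :
    ((Finset.Ico (2*m) (2*n)).filter (fun a => Odd a)).card = n - m := by
  have h : (Finset.Ico (2*m) (2*n)).filter (fun a => Odd a)
      = (Finset.Ico m n).image (fun i => 2*i+1) := by
    ext a
    simp only [Finset.mem_filter, Finset.mem_Ico, Finset.mem_image, Nat.odd_iff]
    constructor
    · rintro ⟨⟨h1, h2⟩, h3⟩
      exact ⟨a / 2, by omega, by omega⟩
    · rintro ⟨i, ⟨h1, h2⟩, rfl⟩
      omega
  rw [h, Finset.card_image_of_injective _ (fun a b h => by omega), Nat.card_Ico]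

lemma Ft_step (t : ℕ) (ht : 1 ≤ t) :
    Ft (t+2) = Ft t ∪ (Finset.Ico (2^(t+1)) (2^(t+2))).filter (fun a => Odd a) := by
  have hp1 : 2^(t+1) = 2*2^t := by ring
  have hp2 : 2^(t+2) = 4*2^t := by ring
  have hT : 1 ≤ 2^t := Nat.one_le_two_pow
  ext a
  simp only [Ft, Finset.mem_union, Finset.mem_filter, Finset.mem_Ioc, Finset.mem_Ico]
  rcases Nat.lt_or_ge a (2^t) with hr1 | hr1
  · by_cases ha0 : a = 0
    · subst ha0
      constructor
      · rintro ⟨⟨u1, _⟩, _⟩; omega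
      · rintro (⟨⟨u1, _⟩, _⟩ | ⟨⟨u1, u2⟩, _⟩)
        · omega
        · have : (0:ℕ) < 2^(t+1) := Nat.pow_pos (by norm_num)
          omega
    have hlog : Nat.log 2 a ≤ t - 1 := by
      by_contra h
      have h2 : 2^t ≤ 2^(Nat.log 2 a) := Nat.pow_le_pow_right (by norm_num) (by omega)
      have h3 := Nat.pow_log_le_self 2 ha0
      omega
    have hpar : Odd (t + 2 - Nat.log 2 a) ↔ Odd (t - Nat.log 2 a) := by
      rw [Nat.odd_iff, Nat.odd_iff]; omega
    constructor
    · rintro ⟨⟨u1, u2⟩, u3, u4⟩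
      exact Or.inl ⟨⟨u1, by omega⟩, u3, hpar.mp u4⟩
    · rintro (⟨⟨u1, u2⟩, u3, u4⟩ | ⟨⟨u1, u2⟩, u3⟩)
      · exact ⟨⟨u1, by omega⟩, u3, hpar.mpr u4⟩
      · omega
  · rcases Nat.lt_or_ge a (2^(t+1)) with hr2 | hr2
    · have hlog : Nat.log 2 a = t := Nat.log_eq_of_pow_le_of_lt_pow hr1 hr2
      constructor
      · rintro ⟨⟨u1, u2⟩, u3, u4⟩
        rw [hlog, show t + 2 - t = 2 by omega] at u4
        exact absurd u4 (by decide)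
      · rintro (⟨⟨u1, u2⟩, u3, u4⟩ | ⟨⟨u1, u2⟩, u3⟩) <;> omega
    · constructor
      · rintro ⟨⟨u1, u2⟩, u3, u4⟩
        exact Or.inr ⟨⟨hr2, by omega⟩, u3⟩
      · rintro (⟨⟨u1, u2⟩, u3, u4⟩ | ⟨⟨u1, u2⟩, u3⟩)
        · omega
        · have hlog : Nat.log 2 a = t + 1 := Nat.log_eq_of_pow_le_of_lt_pow u1 u2
          refine ⟨⟨by omega, by omega⟩, u3, ?_⟩
          rw [hlog, show t + 2 - (t+1) = 1 by omega]
          decide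

lemma card_Ft_step (t : ℕ) (ht : 1 ≤ t) : (Ft (t+2)).card = (Ft t).card + 2^t := by
  rw [Ft_step t ht]
  rw [Finset.card_union_of_disjoint]
  · congr 1
    have : (2:ℕ)^(t+1) = 2*2^t := by ring
    have h2 : (2:ℕ)^(t+2) = 2*2^(t+1) := by ring
    rw [this, h2, this, odd_count]
    have hT : 1 ≤ 2^t := Nat.one_le_two_pow
    omega
  · rw [Finset.disjoint_left]
    intro a ha hb
    simp only [Ft, Finset.mem_filter, Finset.mem_Ioc] at ha
    simp only [Finset.mem_filter, Finset.mem_Ico] at hb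
    have h1 : (2:ℕ)^t - 1 < 2^(t+1) := by
      have : (2:ℕ)^t < 2^(t+1) := by
        have : (2:ℕ)^(t+1) = 2*2^t := by ring
        have hT : 1 ≤ 2^t := Nat.one_le_two_pow
        omega
      omega
    omega

lemma key_card : ∀ n : ℕ,
    3 * ((Ft (n+2)).card : ℤ) = 2^(n+2) + (-1)^(n+1) ∧
    3 * ((Ft (n+3)).card : ℤ) = 2^(n+3) + (-1)^(n+2) := by
  intro n
  induction n with
  | zero =>
    constructor
    · rw [card_Ft_two]; norm_num
    · rw [card_Ft_three]; norm_num
  | succ n ih =>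
    obtain ⟨ih1, ih2⟩ := ih
    refine ⟨by convert ih2 using 3 <;> omega, ?_⟩
    have hstep := card_Ft_step (n+2) (by omega)
    have : (n + 2) + 2 = n + 1 + 3 := by omega
    rw [this] at hstep
    rw [hstep]
    push_cast
    rw [mul_add, ih1]
    have h1 : ((-1:ℤ))^(n+1+2) = (-1)^(n+1) := by
      rw [pow_add]; norm_num
    rw [h1]
    ring

theorem stmt_5 (t : ℕ) (ht : 2 ≤ t) :
    (({a : ℕ | 1 ≤ a ∧ a ≤ 2 ^ t - 1 ∧ Odd a ∧ Odd (cycEps (2 ^ t - 1) a)}.ncard : ℤ)) =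
      (2 ^ t + (-1 : ℤ) ^ (t - 1)) / 3 := by
  obtain ⟨n, rfl⟩ : ∃ n, t = n + 2 := ⟨t - 2, by omega⟩
  have hset : {a : ℕ | 1 ≤ a ∧ a ≤ 2 ^ (n+2) - 1 ∧ Odd a ∧ Odd (cycEps (2 ^ (n+2) - 1) a)}
      = ↑(Ft (n+2)) := by
    ext a
    simp only [Set.mem_setOf_eq, Finset.coe_filter, Ft, Finset.mem_Ioc, Set.mem_setOf_eq]
    constructor
    · rintro ⟨h1, h2, h3, h4⟩
      rw [cycEps_eq' (n+2) a (by omega) h1 h2] at h4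
      exact ⟨⟨h1, h2⟩, h3, h4⟩
    · rintro ⟨⟨h1, h2⟩, h3, h4⟩
      rw [← cycEps_eq' (n+2) a (by omega) h1 h2] at h4
      exact ⟨h1, h2, h3, h4⟩
  rw [hset, Set.ncard_coe_finset]
  have hk := (key_card n).1
  have hpar : (n + 2 - 1) = n + 1 := by omega
  rw [hpar, ← hk]
  rw [Int.mul_ediv_cancel_left _ (by norm_num)]
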